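/- For λ ≥ 1, the integral over ℂ of χ_λ(ξ)·4/(1+|ξ|²)² with respect to Lebesgue measure equals (4π/3)(λ² + 1 + λ^{-2}); equivalently, ∫_{S²} χ_λ dA = (4π/3)(λ² + 1 + λ^{-2}) where χ_λ is pulled back to S² by stereographic projection. -/

import Mathlib

open MeasureTheory

noncomputable def chi (l : ℝ) (ξ : ℂ) : ℝ :=
  (1 + l ^ 2 * ‖ξ‖ ^ 2) ^ 2 / (l ^ 2 * (1 + ‖ξ‖ ^ 2) ^ 2)

/-- `∫_{S²} χ_λ dA = (4π/3)(λ² + 1 + λ^{-2})`, computed in stereographic coordinates with the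
spherical area element `4/(1+|ξ|²)² dA_ℂ`. -/
theorem stmt6 (l : ℝ) (hl : 1 ≤ l) :
    ∫ ξ : ℂ, chi l ξ * (4 / (1 + ‖ξ‖ ^ 2) ^ 2) =
      (4 * Real.pi / 3) * (l ^ 2 + 1 + (l ^ 2)⁻¹) := by
  have hl0 : (0:ℝ) < l := lt_of_lt_of_le one_pos hl
  have hl2 : (0:ℝ) < l ^ 2 := by positivity
  set G : ℝ → ℝ := fun r => (1 + l ^ 2 * r ^ 2) ^ 2 / (l ^ 2 * (1 + r ^ 2) ^ 2) *
      (4 / (1 + r ^ 2) ^ 2) with hG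
  -- antiderivative of r * G r
  set F : ℝ → ℝ := fun r => (2 / l ^ 2) *
      (-((1 - l ^ 2) ^ 2 / (3 * (1 + r ^ 2) ^ 3)) - (1 - l ^ 2) * l ^ 2 / (1 + r ^ 2) ^ 2
        - l ^ 4 / (1 + r ^ 2)) with hF
  have hupos : ∀ r : ℝ, (0:ℝ) < 1 + r ^ 2 := fun r => by positivity
  have hderiv : ∀ r : ℝ, HasDerivAt F (r * G r) r := by
    intro r
    have hu : HasDerivAt (fun r : ℝ => 1 + r ^ 2) (2 * r) r := by
      simpa using (hasDerivAt_pow 2 r).const_add 1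
    have h3 : HasDerivAt (fun r : ℝ => (1 - l ^ 2) ^ 2 / (3 * (1 + r ^ 2) ^ 3))
        ((0 * (3 * (1 + r ^ 2) ^ 3) - (1 - l ^ 2) ^ 2 * (3 * (↑3 * (1 + r ^ 2) ^ 2 * (2 * r))))
          / (3 * (1 + r ^ 2) ^ 3) ^ 2) r := by
      exact (hasDerivAt_const r ((1 - l ^ 2) ^ 2)).div ((hu.pow 3).const_mul 3)
        (by positivity)
    have h2 : HasDerivAt (fun r : ℝ => (1 - l ^ 2) * l ^ 2 / (1 + r ^ 2) ^ 2)
        ((0 * (1 + r ^ 2) ^ 2 - (1 - l ^ 2) * l ^ 2 * (↑2 * (1 + r ^ 2) ^ 1 * (2 * r)))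
          / ((1 + r ^ 2) ^ 2) ^ 2) r := by
      exact (hasDerivAt_const r ((1 - l ^ 2) * l ^ 2)).div (hu.pow 2) (by positivity)
    have h1 : HasDerivAt (fun r : ℝ => l ^ 4 / (1 + r ^ 2))
        ((0 * (1 + r ^ 2) - l ^ 4 * (2 * r)) / (1 + r ^ 2) ^ 2) r := by
      exact (hasDerivAt_const r (l ^ 4)).div hu (by positivity)
    have := (((h3.neg.sub h2).sub h1).const_mul (2 / l ^ 2))
    refine this.congr_deriv ?_
    have h0 : (1 + r ^ 2) ≠ 0 := (hupos r).ne'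
    simp only [hG]
    field_simp
    ring
  have htends : Filter.Tendsto F Filter.atTop (nhds 0) := by
    have hv : Filter.Tendsto (fun r : ℝ => 1 + r ^ 2) Filter.atTop Filter.atTop :=
      Filter.tendsto_atTop_add_const_left _ 1 (Filter.tendsto_pow_atTop two_ne_zero)
    have t3 : Filter.Tendsto (fun r : ℝ => (1 - l ^ 2) ^ 2 / (3 * (1 + r ^ 2) ^ 3))
        Filter.atTop (nhds 0) :=
      Filter.Tendsto.div_atTop tendsto_const_nhds
        (((Filter.tendsto_pow_atTop three_ne_zero).comp hv).const_mul_atTop (by norm_num))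
    have t2 : Filter.Tendsto (fun r : ℝ => (1 - l ^ 2) * l ^ 2 / (1 + r ^ 2) ^ 2)
        Filter.atTop (nhds 0) :=
      Filter.Tendsto.div_atTop tendsto_const_nhds ((Filter.tendsto_pow_atTop two_ne_zero).comp hv)
    have t1 : Filter.Tendsto (fun r : ℝ => l ^ 4 / (1 + r ^ 2)) Filter.atTop (nhds 0) :=
      Filter.Tendsto.div_atTop tendsto_const_nhds hv
    have := ((t3.neg.sub t2).sub t1).const_mul (2 / l ^ 2)
    simpa using this
  have hpos : ∀ x ∈ Set.Ioi (0:ℝ), 0 ≤ x * G x := by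
    intro x hx
    have hx0 : (0:ℝ) < x := hx
    have := hupos x
    have : 0 ≤ G x := by
      simp only [hG]
      positivity
    positivity
  have hint : ∫ y in Set.Ioi (0:ℝ), y * G y = 0 - F 0 :=
    integral_Ioi_of_hasDerivAt_of_nonneg' (fun x _ => hderiv x) hpos htends
  have hnorm : ∀ ξ : ℂ, chi l ξ * (4 / (1 + ‖ξ‖ ^ 2) ^ 2) = G ‖ξ‖ := by
    intro ξ
    simp only [chi, hG]
  calc ∫ ξ : ℂ, chi l ξ * (4 / (1 + ‖ξ‖ ^ 2) ^ 2)
      = ∫ ξ : ℂ, G ‖ξ‖ := by simp_rw [hnorm]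
    _ = (4 * Real.pi / 3) * (l ^ 2 + 1 + (l ^ 2)⁻¹) := by
        rw [integral_fun_norm_addHaar volume G]
        simp only [Complex.finrank_real_complex, Measure.real, Complex.volume_ball, smul_eq_mul,
          nsmul_eq_mul, pow_one]
        norm_num
        rw [hint]
        simp only [hF]
        have hl2' : (l:ℝ) ^ 2 ≠ 0 := hl2.ne'
        field_simp
        ring
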